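/- arXiv:2210.16603 — 2 statements merged into one kernel-verified Lean document; each statement's English description precedes it below -/
import Mathlib

section
/- The 5-dimensional spined cube SQ_5 is not vertex-transitive. -/
/-- The "difference vector" of the neighbor rules of the spined cube, `i` being the
0-based index of the flipped bit. -/
def sqDelta (n : ℕ) (x : Fin n → ZMod 2) (i : Fin n) : Fin n → ZMod 2 :=
  fun j =>
    (if j = i then 1 else 0) +
    (if i.val + 5 ≤ n then
      (if j.val = i.val + 1 then x ⟨n - 2, by have := i.isLt; omega⟩ else 0) +
      (if j.val = i.val + 2 then x ⟨n - 1, by have := i.isLt; omega⟩ else 0)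
    else if n ≤ i.val + 2 then 0
    else (if j.val = i.val + 1 then x ⟨n - 1, by have := i.isLt; omega⟩ else 0))

/-- The `n`-dimensional spined cube `SQ_n`. -/
def spinedCube (n : ℕ) : SimpleGraph (Fin n → ZMod 2) :=
  SimpleGraph.fromRel (fun x y => ∃ i : Fin n, y = x + sqDelta n x i)

instance : DecidableRel (spinedCube 5).Adj := fun x y =>
  decidable_of_iff (x ≠ y ∧ ((∃ i, y = x + sqDelta 5 x i) ∨ (∃ i, x = y + sqDelta 5 y i)))
    Iff.rfl

/-- Number of vertices reachable by a walk of length 2 from `v`. -/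
def ball2 (v : Fin 5 → ZMod 2) : ℕ :=
  (Finset.univ.filter
    (fun w : Fin 5 → ZMod 2 =>
      ∃ a, (spinedCube 5).Adj v a ∧ (spinedCube 5).Adj a w)).card

lemma ball2_invariant (e : spinedCube 5 ≃g spinedCube 5) (v : Fin 5 → ZMod 2) :
    ball2 v = ball2 (e v) := by
  unfold ball2
  apply Finset.card_bij (fun w _ => e w)
  · intro w hw
    simp only [Finset.mem_filter, Finset.mem_univ, true_and] at hw ⊢
    obtain ⟨a, h1, h2⟩ := hw
    exact ⟨e a, e.map_adj_iff.mpr h1, e.map_adj_iff.mpr h2⟩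
  · intro a _ b _ h
    exact e.injective h
  · intro w hw
    simp only [Finset.mem_filter, Finset.mem_univ, true_and] at hw ⊢
    obtain ⟨a, h1, h2⟩ := hw
    refine ⟨e.symm w, ⟨e.symm a, ?_, ?_⟩, by simp⟩
    · have := e.symm.map_adj_iff.mpr h1; simpa using this
    · exact e.symm.map_adj_iff.mpr h2

/-- The 5-dimensional spined cube `SQ_5` is not vertex-transitive. -/
theorem sq5_not_vertexTransitive :
    ¬ ∀ u v : Fin 5 → ZMod 2, ∃ e : spinedCube 5 ≃g spinedCube 5, e u = v := by
  intro h
  obtain ⟨e, he⟩ := h (fun _ => 0) (fun j => if j = 4 then 1 else 0)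
  have h1 : ball2 (fun _ => 0) = 15 := by decide
  have h2 : ball2 (fun j => if j = 4 then 1 else 0) = 16 := by decide
  have := ball2_invariant e (fun _ => 0)
  rw [h1, he, h2] at this
  exact absurd this (by norm_num)
end

section
/- For n ≥ 6, in the graph Γ_n there are exactly three 4-cycles passing through the edge from (0,1) to (0,4). -/
/-- The 4-Cayley graph `Γ` of `H = (ℤ/2)^m` (with `m = n - 2`): vertices are the
four copies `H × {0,1,2,3}` of `H`, with `(h,i)` adjacent to `(g,j)` iff
`g - h ∈ T i j`, for the connection sets of Definition 3.2 of the paper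
(the paper's labels `1,2,3,4` correspond to `0,1,2,3` here, and `aₖ` is the
`k`-th standard basis vector, 0-indexed). -/
def gammaGraph (m : ℕ) (hm : 4 ≤ m) : SimpleGraph ((Fin m → ZMod 2) × Fin 4) :=
  SimpleGraph.fromRel (fun p q =>
    (p.2 = 0 ∧ q.2 = 0 ∧ ∃ i : Fin m, q.1 - p.1 = Pi.single i 1) ∨
    (p.2 = 1 ∧ q.2 = 1 ∧
      ((∃ i : Fin m, ∃ h : i.val + 3 ≤ m,
          q.1 - p.1 = Pi.single i 1 + Pi.single (⟨i.val + 2, by omega⟩ : Fin m) 1) ∨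
        q.1 - p.1 = Pi.single (⟨m - 2, by omega⟩ : Fin m) 1 +
          Pi.single (⟨m - 1, by omega⟩ : Fin m) 1)) ∨
    (p.2 = 2 ∧ q.2 = 2 ∧
      ((∃ i : Fin m, ∃ h : i.val + 3 ≤ m,
          q.1 - p.1 = Pi.single i 1 + Pi.single (⟨i.val + 1, by omega⟩ : Fin m) 1 +
            Pi.single (⟨i.val + 2, by omega⟩ : Fin m) 1) ∨
        q.1 - p.1 = Pi.single (⟨m - 2, by omega⟩ : Fin m) 1 +
          Pi.single (⟨m - 1, by omega⟩ : Fin m) 1)) ∨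
    (p.2 = 3 ∧ q.2 = 3 ∧
      ((∃ i : Fin m, ∃ h : i.val + 3 ≤ m,
          q.1 - p.1 = Pi.single i 1 + Pi.single (⟨i.val + 1, by omega⟩ : Fin m) 1) ∨
        q.1 - p.1 = Pi.single (⟨m - 2, by omega⟩ : Fin m) 1 ∨
        q.1 - p.1 = Pi.single (⟨m - 1, by omega⟩ : Fin m) 1)) ∨
    (p.2 = 0 ∧ q.2 = 1 ∧ q.1 = p.1) ∨
    (p.2 = 0 ∧ q.2 = 3 ∧ q.1 = p.1) ∨
    (p.2 = 2 ∧ q.2 = 3 ∧ q.1 = p.1) ∨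
    (p.2 = 1 ∧ q.2 = 2 ∧
      (q.1 = p.1 ∨ q.1 - p.1 = Pi.single (⟨m - 1, by omega⟩ : Fin m) 1)))

/-- `C` is (the edge set of) a 4-cycle in the graph `G`: there are four distinct
vertices `a, b, c, d`, consecutively adjacent, whose four cycle edges make up `C`. -/
def IsFourCycle {V : Type*} (G : SimpleGraph V) (C : Set (Sym2 V)) : Prop :=
  ∃ a b c d : V, a ≠ b ∧ a ≠ c ∧ a ≠ d ∧ b ≠ c ∧ b ≠ d ∧ c ≠ d ∧
    G.Adj a b ∧ G.Adj b c ∧ G.Adj c d ∧ G.Adj d a ∧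
    C = {s(a, b), s(b, c), s(c, d), s(d, a)}

lemma isFourCycle_rooted {V : Type*} {G : SimpleGraph V} {C : Set (Sym2 V)}
    (h : IsFourCycle G C) {u v : V} (huv : s(u,v) ∈ C) :
    ∃ b c, u ≠ b ∧ u ≠ c ∧ u ≠ v ∧ b ≠ c ∧ b ≠ v ∧ c ≠ v ∧
      G.Adj u b ∧ G.Adj b c ∧ G.Adj c v ∧
      C = {s(u,b), s(b,c), s(c,v), s(v,u)} := by
  obtain ⟨a, b, c, d, hab, hac, had, hbc, hbd, hcd, Aab, Abc, Acd, Ada, hC⟩ := h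
  have hba := hab.symm; have hca := hac.symm; have hda := had.symm
  have hcb := hbc.symm; have hdb := hbd.symm; have hdc := hcd.symm
  subst hC
  simp only [Set.mem_insert_iff, Set.mem_singleton_iff, Sym2.eq, Sym2.rel_iff',
    Prod.mk.injEq, Prod.swap_prod_mk] at huv
  rcases huv with (⟨hu,hv⟩|⟨hu,hv⟩)|(⟨hu,hv⟩|⟨hu,hv⟩)|(⟨hu,hv⟩|⟨hu,hv⟩)|(⟨hu,hv⟩|⟨hu,hv⟩) <;>
    subst hu <;> subst hv
  · exact ⟨d, c, had, hac, hab, hdc, hdb, hcb, Ada.symm, Acd.symm, Abc.symm,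
      by ext x; simp [Sym2.eq_swap]; try tauto⟩
  · exact ⟨c, d, hbc, hbd, hba, hcd, hca, hda, Abc, Acd, Ada,
      by ext x; simp [Sym2.eq_swap]; try tauto⟩
  · exact ⟨a, d, hba, hbd, hbc, had, hac, hdc, Aab.symm, Ada.symm, Acd.symm,
      by ext x; simp [Sym2.eq_swap]; try tauto⟩
  · exact ⟨d, a, hcd, hca, hcb, hda, hdb, hab, Acd, Ada, Aab,
      by ext x; simp [Sym2.eq_swap]; try tauto⟩
  · exact ⟨b, a, hcb, hca, hcd, hba, hbd, had, Abc.symm, Aab.symm, Ada.symm,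
      by ext x; simp [Sym2.eq_swap]; try tauto⟩
  · exact ⟨a, b, hda, hdb, hdc, hab, hac, hbc, Ada, Aab, Abc,
      by ext x; simp [Sym2.eq_swap]; try tauto⟩
  · exact ⟨c, b, hdc, hdb, hda, hcb, hca, hba, Acd.symm, Abc.symm, Aab.symm,
      by ext x; simp [Sym2.eq_swap]; try tauto⟩
  · exact ⟨b, c, hab, hac, had, hbc, hbd, hcd, Aab, Abc, Acd,
      by ext x; simp [Sym2.eq_swap]; try tauto⟩

section
variable {m : ℕ} (hm : 4 ≤ m)

lemma pi_neg (y : Fin m → ZMod 2) : -y = y := by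
  funext i; exact CharTwo.neg_eq _

lemma single_ne_zero' (i : Fin m) : (Pi.single i 1 : Fin m → ZMod 2) ≠ 0 := by
  intro h
  have := congrFun h i
  simp at this

lemma single_inj' {i j : Fin m} (h : (Pi.single i 1 : Fin m → ZMod 2) = Pi.single j 1) : i = j := by
  by_contra hne
  have := congrFun h i
  rw [Pi.single_eq_same, Pi.single_eq_of_ne hne] at this
  exact one_ne_zero this

lemma single_ne_add' {k i j : Fin m} (hij : i ≠ j) :
    (Pi.single k 1 : Fin m → ZMod 2) ≠ Pi.single i 1 + Pi.single j 1 := by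
  intro h
  have hi := congrFun h i
  have hj := congrFun h j
  rw [Pi.add_apply, Pi.single_eq_same, Pi.single_eq_of_ne hij, add_zero] at hi
  rw [Pi.add_apply, Pi.single_eq_same, Pi.single_eq_of_ne (Ne.symm hij), zero_add] at hj
  -- hi : Pi.single k 1 i = 1, hj : Pi.single k 1 j = 1
  rcases eq_or_ne k i with rfl | hki
  · rw [Pi.single_eq_of_ne (Ne.symm hij)] at hj; exact one_ne_zero hj.symm
  · rw [Pi.single_eq_of_ne (Ne.symm hki)] at hi; exact one_ne_zero hi.symm

-- adjacency lemmas
lemma adj01 (x y : Fin m → ZMod 2) :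
    (gammaGraph m hm).Adj (x,0) (y,1) ↔ x = y := by
  simp [- Fin.val_eq_zero_iff, gammaGraph, SimpleGraph.fromRel_adj, Prod.ext_iff, Fin.ext_iff, eq_comm,
    show ((3:Fin 4)).val = 3 from rfl, show ((2:Fin 4)).val = 2 from rfl,
    show ((1:Fin 4)).val = 1 from rfl, show ((0:Fin 4)).val = 0 from rfl]

lemma adj03 (x y : Fin m → ZMod 2) :
    (gammaGraph m hm).Adj (x,0) (y,3) ↔ x = y := by
  simp [- Fin.val_eq_zero_iff, gammaGraph, SimpleGraph.fromRel_adj, Prod.ext_iff, Fin.ext_iff, eq_comm,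
    show ((3:Fin 4)).val = 3 from rfl, show ((2:Fin 4)).val = 2 from rfl,
    show ((1:Fin 4)).val = 1 from rfl, show ((0:Fin 4)).val = 0 from rfl]

lemma adj23 (x y : Fin m → ZMod 2) :
    (gammaGraph m hm).Adj (x,2) (y,3) ↔ x = y := by
  simp [- Fin.val_eq_zero_iff, gammaGraph, SimpleGraph.fromRel_adj, Prod.ext_iff, Fin.ext_iff, eq_comm,
    show ((3:Fin 4)).val = 3 from rfl, show ((2:Fin 4)).val = 2 from rfl,
    show ((1:Fin 4)).val = 1 from rfl, show ((0:Fin 4)).val = 0 from rfl]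

lemma adj02 (x y : Fin m → ZMod 2) : ¬ (gammaGraph m hm).Adj (x,0) (y,2) := by
  simp [- Fin.val_eq_zero_iff, gammaGraph, SimpleGraph.fromRel_adj, Prod.ext_iff, Fin.ext_iff, eq_comm,
    show ((3:Fin 4)).val = 3 from rfl, show ((2:Fin 4)).val = 2 from rfl,
    show ((1:Fin 4)).val = 1 from rfl, show ((0:Fin 4)).val = 0 from rfl]

lemma adj13 (x y : Fin m → ZMod 2) : ¬ (gammaGraph m hm).Adj (x,1) (y,3) := by
  simp [- Fin.val_eq_zero_iff, gammaGraph, SimpleGraph.fromRel_adj, Prod.ext_iff, Fin.ext_iff, eq_comm,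
    show ((3:Fin 4)).val = 3 from rfl, show ((2:Fin 4)).val = 2 from rfl,
    show ((1:Fin 4)).val = 1 from rfl, show ((0:Fin 4)).val = 0 from rfl]

lemma adj12_self (x : Fin m → ZMod 2) : (gammaGraph m hm).Adj (x,1) (x,2) := by
  simp [- Fin.val_eq_zero_iff, gammaGraph, SimpleGraph.fromRel_adj, Prod.ext_iff, Fin.ext_iff,
    show ((2:Fin 4)).val = 2 from rfl, show ((1:Fin 4)).val = 1 from rfl]


lemma nbr_u (q : (Fin m → ZMod 2) × Fin 4)
    (h : (gammaGraph m hm).Adj ((0 : Fin m → ZMod 2), 0) q) :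
    (∃ i : Fin m, q = (Pi.single i 1, 0)) ∨ q = (0,1) ∨ q = (0,3) := by
  obtain ⟨x, j⟩ := q
  simp [- Fin.val_eq_zero_iff, gammaGraph, SimpleGraph.fromRel_adj, Prod.ext_iff, Fin.ext_iff, sub_zero, zero_sub, pi_neg,
    show ((3:Fin 4)).val = 3 from rfl, show ((2:Fin 4)).val = 2 from rfl,
    show ((1:Fin 4)).val = 1 from rfl, show ((0:Fin 4)).val = 0 from rfl] at h
  obtain ⟨-, h⟩ := h
  rcases h with (⟨hj, i, rfl⟩ | ⟨hj, rfl⟩ | ⟨hj, rfl⟩) | ⟨hj, i, rfl⟩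
  · exact Or.inl ⟨i, by simp [Prod.ext_iff, Fin.ext_iff, hj, show ((3:Fin 4)).val = 3 from rfl, show ((1:Fin 4)).val = 1 from rfl]⟩
  · exact Or.inr (Or.inl (by simp [Prod.ext_iff, Fin.ext_iff, hj, show ((3:Fin 4)).val = 3 from rfl, show ((1:Fin 4)).val = 1 from rfl]))
  · exact Or.inr (Or.inr (by simp [Prod.ext_iff, Fin.ext_iff, hj, show ((3:Fin 4)).val = 3 from rfl, show ((1:Fin 4)).val = 1 from rfl]))
  · exact Or.inl ⟨i, by simp [Prod.ext_iff, Fin.ext_iff, hj, show ((3:Fin 4)).val = 3 from rfl, show ((1:Fin 4)).val = 1 from rfl]⟩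


lemma nbr_v (q : (Fin m → ZMod 2) × Fin 4)
    (h : (gammaGraph m hm).Adj q ((0 : Fin m → ZMod 2), 3)) :
    q = (0, 0) ∨ q = (0, 2) ∨
      (∃ i : Fin m, ∃ hi : i.val + 3 ≤ m,
        q = (Pi.single i 1 + Pi.single (⟨i.val + 1, by omega⟩ : Fin m) 1, 3)) ∨
      q = (Pi.single (⟨m - 2, by omega⟩ : Fin m) 1, 3) ∨
      q = (Pi.single (⟨m - 1, by omega⟩ : Fin m) 1, 3) := by
  obtain ⟨x, j⟩ := q
  simp [- Fin.val_eq_zero_iff, gammaGraph, SimpleGraph.fromRel_adj, Prod.ext_iff, Fin.ext_iff, sub_zero, zero_sub, pi_neg,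
    show ((3:Fin 4)).val = 3 from rfl, show ((2:Fin 4)).val = 2 from rfl,
    show ((1:Fin 4)).val = 1 from rfl, show ((0:Fin 4)).val = 0 from rfl] at h
  obtain ⟨-, h⟩ := h
  have fix : ∀ hj : j.val = 3, j = 3 := fun hj => Fin.ext hj
  rcases h with (⟨hj, hx⟩ | ⟨hj, rfl⟩ | ⟨hj, rfl⟩) | ⟨hj, hx⟩
  · cases fix hj
    rcases hx with ⟨i, hi, rfl⟩ | rfl | rfl
    · exact Or.inr (Or.inr (Or.inl ⟨i, hi, rfl⟩))
    · exact Or.inr (Or.inr (Or.inr (Or.inl rfl)))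
    · exact Or.inr (Or.inr (Or.inr (Or.inr rfl)))
  · exact Or.inl (by simp [Prod.ext_iff, Fin.ext_iff, hj])
  · exact Or.inr (Or.inl (by simp [Prod.ext_iff, Fin.ext_iff, hj]))
  · cases fix hj
    rcases hx with ⟨i, hi, rfl⟩ | rfl | rfl
    · exact Or.inr (Or.inr (Or.inl ⟨i, hi, rfl⟩))
    · exact Or.inr (Or.inr (Or.inr (Or.inl rfl)))
    · exact Or.inr (Or.inr (Or.inr (Or.inr rfl)))


lemma adj00_single (i : Fin m) :
    (gammaGraph m hm).Adj ((0 : Fin m → ZMod 2), 0) (Pi.single i 1, 0) := by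
  unfold gammaGraph
  rw [SimpleGraph.fromRel_adj]
  refine ⟨fun h => single_ne_zero' i (congrArg Prod.fst h).symm,
    Or.inl (Or.inl ⟨rfl, rfl, i, by rw [sub_zero]⟩)⟩

lemma adj33_last2 :
    (gammaGraph m hm).Adj (Pi.single (⟨m - 2, by omega⟩ : Fin m) 1, 3)
      ((0 : Fin m → ZMod 2), 3) := by
  unfold gammaGraph
  rw [SimpleGraph.fromRel_adj]
  refine ⟨fun h => single_ne_zero' _ (congrArg Prod.fst h),
    Or.inl (Or.inr (Or.inr (Or.inr (Or.inl ⟨rfl, rfl,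
      Or.inr (Or.inl (by rw [zero_sub, pi_neg]))⟩))))⟩

lemma adj33_last1 :
    (gammaGraph m hm).Adj (Pi.single (⟨m - 1, by omega⟩ : Fin m) 1, 3)
      ((0 : Fin m → ZMod 2), 3) := by
  unfold gammaGraph
  rw [SimpleGraph.fromRel_adj]
  refine ⟨fun h => single_ne_zero' _ (congrArg Prod.fst h),
    Or.inl (Or.inr (Or.inr (Or.inr (Or.inl ⟨rfl, rfl,
      Or.inr (Or.inr (by rw [zero_sub, pi_neg]))⟩))))⟩


def cyc1 (m : ℕ) : Set (Sym2 ((Fin m → ZMod 2) × Fin 4)) :=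
  {s((0,0),(0,1)), s((0,1),(0,2)), s((0,2),(0,3)), s((0,3),(0,0))}

def cyc2 (m : ℕ) (w : Fin m → ZMod 2) : Set (Sym2 ((Fin m → ZMod 2) × Fin 4)) :=
  {s((0,0),(w,0)), s((w,0),(w,3)), s((w,3),(0,3)), s((0,3),(0,0))}

lemma classify (hm : 4 ≤ m) :
    {C : Set (Sym2 ((Fin m → ZMod 2) × Fin 4)) |
        IsFourCycle (gammaGraph m hm) C ∧
        s(((0 : Fin m → ZMod 2), (0 : Fin 4)), (0, 3)) ∈ C} =
      {cyc1 m, cyc2 m (Pi.single (⟨m - 2, by omega⟩ : Fin m) 1),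
        cyc2 m (Pi.single (⟨m - 1, by omega⟩ : Fin m) 1)} := by
  ext C
  simp only [Set.mem_setOf_eq, Set.mem_insert_iff, Set.mem_singleton_iff]
  constructor
  · rintro ⟨hC, hmem⟩
    obtain ⟨b, c, hub, huc, huv, hbc, hbv, hcv, Aub, Abc, Acv, hCeq⟩ :=
      isFourCycle_rooted hC hmem
    rcases nbr_u hm b Aub with ⟨k, rfl⟩ | rfl | rfl
    · -- b = (e k, 0)
      rcases nbr_v hm c Acv with rfl | rfl | ⟨i, hi, rfl⟩ | rfl | rfl
      · exact absurd rfl huc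
      · exact absurd Abc (adj02 hm _ _)
      · -- c = (e i + e (i+1), 3): middle edge forces e k = e i + e (i+1), impossible
        have := (adj03 hm _ _).mp Abc
        exact absurd this (single_ne_add' (Fin.ne_of_val_ne (by simp only [Fin.val_mk]; omega)))
      · -- c = (e (m-2), 3)
        have h1 := (adj03 hm _ _).mp Abc
        rw [hCeq, h1]
        exact Or.inr (Or.inl rfl)
      · have h1 := (adj03 hm _ _).mp Abc
        rw [hCeq, h1]
        exact Or.inr (Or.inr rfl)
    · -- b = (0, 1)
      rcases nbr_v hm c Acv with rfl | rfl | ⟨i, hi, rfl⟩ | rfl | rfl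
      · exact absurd rfl huc
      · rw [hCeq]; exact Or.inl rfl
      · exact absurd Abc (adj13 hm _ _)
      · exact absurd Abc (adj13 hm _ _)
      · exact absurd Abc (adj13 hm _ _)
    · exact absurd rfl hbv
  · intro h
    have hswap : s(((0 : Fin m → ZMod 2), (0 : Fin 4)), (0, 3)) =
        s(((0 : Fin m → ZMod 2), (3 : Fin 4)), (0, 0)) := Sym2.eq_swap
    rcases h with rfl | rfl | rfl
    · refine ⟨⟨(0,0), (0,1), (0,2), (0,3), ?_, ?_, ?_, ?_, ?_, ?_,
        (adj01 hm _ _).mpr rfl, adj12_self hm _, (adj23 hm _ _).mpr rfl,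
        ((adj03 hm _ _).mpr rfl).symm, rfl⟩, ?_⟩
      · simp [Prod.ext_iff]
      · simp [Prod.ext_iff]
      · simp [Prod.ext_iff]
      · simp [Prod.ext_iff]
      · simp [Prod.ext_iff]
      · simp [Prod.ext_iff]
      · rw [hswap]; exact Or.inr (Or.inr (Or.inr rfl))
    · refine ⟨⟨(0,0), (Pi.single (⟨m - 2, by omega⟩ : Fin m) 1, 0),
        (Pi.single (⟨m - 2, by omega⟩ : Fin m) 1, 3), (0,3), ?_, ?_, ?_, ?_, ?_, ?_,
        adj00_single hm _, (adj03 hm _ _).mpr rfl, adj33_last2 hm,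
        ((adj03 hm _ _).mpr rfl).symm, rfl⟩, ?_⟩
      · exact fun h => single_ne_zero' _ (congrArg Prod.fst h).symm
      · simp [Prod.ext_iff]
      · simp [Prod.ext_iff]
      · simp [Prod.ext_iff]
      · simp [Prod.ext_iff]
      · exact fun h => single_ne_zero' _ (congrArg Prod.fst h)
      · rw [hswap]; exact Or.inr (Or.inr (Or.inr rfl))
    · refine ⟨⟨(0,0), (Pi.single (⟨m - 1, by omega⟩ : Fin m) 1, 0),
        (Pi.single (⟨m - 1, by omega⟩ : Fin m) 1, 3), (0,3), ?_, ?_, ?_, ?_, ?_, ?_,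
        adj00_single hm _, (adj03 hm _ _).mpr rfl, adj33_last1 hm,
        ((adj03 hm _ _).mpr rfl).symm, rfl⟩, ?_⟩
      · exact fun h => single_ne_zero' _ (congrArg Prod.fst h).symm
      · simp [Prod.ext_iff]
      · simp [Prod.ext_iff]
      · simp [Prod.ext_iff]
      · simp [Prod.ext_iff]
      · exact fun h => single_ne_zero' _ (congrArg Prod.fst h)
      · rw [hswap]; exact Or.inr (Or.inr (Or.inr rfl))

end

section
variable {m : ℕ}

lemma cyc1_ne_cyc2 (w : Fin m → ZMod 2) : cyc1 m ≠ cyc2 m w := by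
  intro h
  have h1 : s(((0 : Fin m → ZMod 2), (0:Fin 4)), (0, 1)) ∈ cyc1 m := Or.inl rfl
  rw [h] at h1
  simp only [cyc2, Set.mem_insert_iff, Set.mem_singleton_iff, Sym2.eq, Sym2.rel_iff',
    Prod.mk.injEq, Prod.swap_prod_mk] at h1
  simp [Prod.ext_iff, Fin.ext_iff, show ((3:Fin 4)).val = 3 from rfl,
    show ((1:Fin 4)).val = 1 from rfl] at h1

lemma cyc2_ne_cyc2 {w w' : Fin m → ZMod 2} (hww' : w ≠ w') (hw : w ≠ 0) (hw' : w' ≠ 0) :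
    cyc2 m w ≠ cyc2 m w' := by
  intro h
  have h1 : s(((0 : Fin m → ZMod 2), (0:Fin 4)), (w, 0)) ∈ cyc2 m w := Or.inl rfl
  rw [h] at h1
  simp only [cyc2, Set.mem_insert_iff, Set.mem_singleton_iff, Sym2.eq, Sym2.rel_iff',
    Prod.mk.injEq, Prod.swap_prod_mk] at h1
  simp [Prod.ext_iff, Fin.ext_iff, hww', hw, hw', (Ne.symm hw'),
    show ((3:Fin 4)).val = 3 from rfl] at h1

end

/-- For `n ≥ 6`, there are exactly three 4-cycles of `Γ_n` through the edge from
`(0,1)` to `(0,4)` (labels `(0,0)`–`(0,3)` here). -/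
theorem gamma_fourCycles_through_edge_14 (n : ℕ) (hn : 6 ≤ n) :
    {C : Set (Sym2 ((Fin (n - 2) → ZMod 2) × Fin 4)) |
        IsFourCycle (gammaGraph (n - 2) (by omega)) C ∧
        s(((0 : Fin (n - 2) → ZMod 2), (0 : Fin 4)), (0, 3)) ∈ C}.ncard = 3 := by
  rw [classify (by omega)]
  have hne : (⟨n - 2 - 2, by omega⟩ : Fin (n - 2)) ≠ ⟨n - 2 - 1, by omega⟩ :=
    Fin.ne_of_val_ne (by simp only [Fin.val_mk]; omega)
  refine Set.ncard_eq_three.mpr ⟨_, _, _, cyc1_ne_cyc2 _, cyc1_ne_cyc2 _,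
    cyc2_ne_cyc2 (fun h => hne (single_inj' h)) (single_ne_zero' _) (single_ne_zero' _), rfl⟩
end
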